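/- Let k be a field, B = k[x]/(x²), C = k[y]/(y²), A = k, and R = B ×_A C ≅ k[x,y]/(x², xy, y²). The natural map Ω¹_{R/k} → Ω¹_{B/k} × Ω¹_{C/k} induced by the two projections is surjective but not injective. -/

import Mathlib

set_option synthInstance.maxHeartbeats 1000000
set_option maxHeartbeats 2000000

/-- `B = k[x]/(x²)`. -/
abbrev TruncB (k : Type*) [Field k] : Type _ :=
  Polynomial k ⧸ Ideal.span {(Polynomial.X : Polynomial k) ^ 2}

/-- `C = k[y]/(y²)`, a separate copy of `k[x]/(x²)`. -/
def TruncC (k : Type*) [Field k] : Type _ := TruncB k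

noncomputable instance (k : Type*) [Field k] : CommRing (TruncC k) :=
  inferInstanceAs (CommRing (TruncB k))

noncomputable instance (k : Type*) [Field k] : Algebra k (TruncC k) :=
  inferInstanceAs (Algebra k (TruncB k))

/-- The augmentation map `k[x]/(x²) → k`, `x ↦ 0`. -/
noncomputable def truncAugB (k : Type*) [Field k] : TruncB k →ₐ[k] k :=
  Ideal.Quotient.liftₐ _ (Polynomial.aeval (0 : k)) (by
    intro a ha
    have h : Ideal.span {(Polynomial.X : Polynomial k) ^ 2} ≤
        RingHom.ker (Polynomial.aeval (0 : k) : Polynomial k →ₐ[k] k).toRingHom := by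
      rw [Ideal.span_le]
      rintro p rfl
      simp [RingHom.mem_ker]
    exact h ha)

/-- The augmentation map `k[y]/(y²) → k`, `y ↦ 0`. -/
noncomputable def truncAugC (k : Type*) [Field k] : TruncC k →ₐ[k] k := truncAugB k

/-- The fibered product `R = B ×_k C` of the two augmentations, as a subalgebra of
`B × C`. -/
noncomputable def FiberProd (k : Type*) [Field k] : Subalgebra k (TruncB k × TruncC k) :=
  AlgHom.equalizer ((truncAugB k).comp (AlgHom.fst k (TruncB k) (TruncC k)))
    ((truncAugC k).comp (AlgHom.snd k (TruncB k) (TruncC k)))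

/-- The first projection `R → B`, as an algebra structure. -/
noncomputable instance (k : Type*) [Field k] : Algebra (FiberProd k) (TruncB k) :=
  ((AlgHom.fst k (TruncB k) (TruncC k)).comp (FiberProd k).val).toAlgebra

noncomputable instance (k : Type*) [Field k] : IsScalarTower k (FiberProd k) (TruncB k) :=
  IsScalarTower.of_algebraMap_eq fun c =>
    (((AlgHom.fst k (TruncB k) (TruncC k)).comp (FiberProd k).val).commutes c).symm

/-- The second projection `R → C`, as an algebra structure. -/
noncomputable instance (k : Type*) [Field k] : Algebra (FiberProd k) (TruncC k) :=
  ((AlgHom.snd k (TruncB k) (TruncC k)).comp (FiberProd k).val).toAlgebra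

noncomputable instance (k : Type*) [Field k] : IsScalarTower k (FiberProd k) (TruncC k) :=
  IsScalarTower.of_algebraMap_eq fun c =>
    (((AlgHom.snd k (TruncB k) (TruncC k)).comp (FiberProd k).val).commutes c).symm

noncomputable instance (k : Type*) [Field k] : SMulCommClass k (FiberProd k) (TruncB k) :=
  ⟨fun c r b => by simp only [Algebra.smul_def]; first | exact (mul_smul_comm c _ b).symm | ring⟩

noncomputable instance (k : Type*) [Field k] : SMulCommClass k (FiberProd k) (TruncC k) :=
  ⟨fun c r b => by simp only [Algebra.smul_def]; first | exact (mul_smul_comm c _ b).symm | ring⟩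

/-- The natural `k`-linear comparison map
`Ω¹_{R/k} → Ω¹_{B/k} × Ω¹_{C/k}` induced by the two projections. -/
noncomputable def kaehlerComparison (k : Type*) [Field k] :
    Ω[(FiberProd k)⁄k] →ₗ[k] Ω[(TruncB k)⁄k] × Ω[(TruncC k)⁄k] :=
  LinearMap.prod
    ((KaehlerDifferential.map k k (FiberProd k) (TruncB k)).restrictScalars k)
    ((KaehlerDifferential.map k k (FiberProd k) (TruncC k)).restrictScalars k)

section Aux

open Polynomial TrivSqZeroExt DualNumber

variable (k : Type*) [Field k]

/-- The map `k[x]/(x²) → k[ε]`, `x ↦ ε`. -/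
noncomputable def truncToDual : TruncB k →ₐ[k] DualNumber k :=
  Ideal.Quotient.liftₐ _ (Polynomial.aeval (ε : DualNumber k)) (by
    intro a ha
    have h : Ideal.span {(Polynomial.X : Polynomial k) ^ 2} ≤
        RingHom.ker (Polynomial.aeval (ε : DualNumber k) : Polynomial k →ₐ[k] DualNumber k).toRingHom := by
      rw [Ideal.span_le]
      rintro p rfl
      simp [RingHom.mem_ker, sq, DualNumber.eps_mul_eps]
    exact h ha)

/-- Same map on the `C` copy. -/
noncomputable def truncToDualC : TruncC k →ₐ[k] DualNumber k := truncToDual k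

@[simp] lemma truncToDual_mk (p : Polynomial k) :
    truncToDual k (Ideal.Quotient.mk _ p) = Polynomial.aeval (ε : DualNumber k) p := rfl

lemma truncAugB_eq_fst (b : TruncB k) : truncAugB k b = (truncToDual k b).fst := by
  obtain ⟨p, rfl⟩ := Ideal.Quotient.mk_surjective b
  have h1 : truncAugB k (Ideal.Quotient.mk _ p) = Polynomial.aeval (0 : k) p := rfl
  rw [h1, truncToDual_mk]
  have := Polynomial.aeval_algHom_apply (TrivSqZeroExt.fstHom k k k) (ε : DualNumber k) p
  rw [show (TrivSqZeroExt.fst ((Polynomial.aeval (ε : DualNumber k)) p) : k)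
      = (TrivSqZeroExt.fstHom k k k) ((Polynomial.aeval (ε : DualNumber k)) p) from rfl, ← this]
  simp

/-- Membership in the fiber product, unfolded. -/
lemma mem_fiberProd_iff (p : TruncB k × TruncC k) :
    p ∈ FiberProd k ↔ truncAugB k p.1 = truncAugC k p.2 := Iff.rfl

variable {k}

/-- First coordinate (constant term). -/
noncomputable def aR (r : FiberProd k) : k := (truncToDual k (r : TruncB k × TruncC k).1).fst
/-- Coefficient of `x`. -/
noncomputable def bR (r : FiberProd k) : k := (truncToDual k (r : TruncB k × TruncC k).1).snd
/-- Coefficient of `y`. -/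
noncomputable def cR (r : FiberProd k) : k := (truncToDualC k (r : TruncB k × TruncC k).2).snd

lemma aR_eq_fst_snd (r : FiberProd k) :
    aR r = (truncToDualC k (r : TruncB k × TruncC k).2).fst := by
  unfold aR
  rw [← truncAugB_eq_fst]
  have h3 : truncAugB k (r : TruncB k × TruncC k).1
      = truncAugC k (r : TruncB k × TruncC k).2 := r.2
  rw [h3]
  exact truncAugB_eq_fst k _

@[simp] lemma aR_one : aR (1 : FiberProd k) = 1 := by
  simp [aR, map_one]
@[simp] lemma bR_one : bR (1 : FiberProd k) = 0 := by
  simp [bR, map_one]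
@[simp] lemma cR_one : cR (1 : FiberProd k) = 0 := by
  simp [cR, map_one]

@[simp] lemma aR_add (r s : FiberProd k) : aR (r + s) = aR r + aR s := by
  simp [aR, map_add]
@[simp] lemma bR_add (r s : FiberProd k) : bR (r + s) = bR r + bR s := by
  simp [bR, map_add]
@[simp] lemma cR_add (r s : FiberProd k) : cR (r + s) = cR r + cR s := by
  simp [cR, map_add]

@[simp] lemma aR_smul (c : k) (r : FiberProd k) : aR (c • r) = c * aR r := by
  simp [aR, map_smul, TrivSqZeroExt.fst_smul, smul_eq_mul]
@[simp] lemma bR_smul (c : k) (r : FiberProd k) : bR (c • r) = c * bR r := by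
  simp [bR, map_smul, TrivSqZeroExt.snd_smul, smul_eq_mul]
@[simp] lemma cR_smul (c : k) (r : FiberProd k) : cR (c • r) = c * cR r := by
  simp [cR, map_smul, TrivSqZeroExt.snd_smul, smul_eq_mul]

@[simp] lemma aR_mul (r s : FiberProd k) : aR (r * s) = aR r * aR s := by
  simp [aR, map_mul]
@[simp] lemma bR_mul (r s : FiberProd k) : bR (r * s) = aR r * bR s + bR r * aR s := by
  simp only [bR, aR]
  rw [show ((r * s : FiberProd k) : TruncB k × TruncC k).1
      = (r : TruncB k × TruncC k).1 * (s : TruncB k × TruncC k).1 from rfl]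
  rw [map_mul, TrivSqZeroExt.snd_mul]
  simp [smul_eq_mul, mul_comm]
@[simp] lemma cR_mul (r s : FiberProd k) : cR (r * s) = aR r * cR s + cR r * aR s := by
  simp only [cR]
  rw [show ((r * s : FiberProd k) : TruncB k × TruncC k).2
      = (r : TruncB k × TruncC k).2 * (s : TruncB k × TruncC k).2 from rfl]
  rw [map_mul, TrivSqZeroExt.snd_mul]
  rw [← aR_eq_fst_snd, ← aR_eq_fst_snd]
  simp [smul_eq_mul, mul_comm]

@[simp] lemma aR_algebraMap (c : k) : aR (algebraMap k (FiberProd k) c) = c := by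
  have : ((algebraMap k (FiberProd k) c : FiberProd k) : TruncB k × TruncC k).1
      = algebraMap k (TruncB k) c := rfl
  simp [aR, this, AlgHom.commutes, TrivSqZeroExt.algebraMap_eq_inl]
@[simp] lemma bR_algebraMap (c : k) : bR (algebraMap k (FiberProd k) c) = 0 := by
  have : ((algebraMap k (FiberProd k) c : FiberProd k) : TruncB k × TruncC k).1
      = algebraMap k (TruncB k) c := rfl
  simp [bR, this, AlgHom.commutes, TrivSqZeroExt.algebraMap_eq_inl]
@[simp] lemma cR_algebraMap (c : k) : cR (algebraMap k (FiberProd k) c) = 0 := by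
  have : ((algebraMap k (FiberProd k) c : FiberProd k) : TruncB k × TruncC k).2
      = algebraMap k (TruncC k) c := rfl
  simp [cR, this, AlgHom.commutes, TrivSqZeroExt.algebraMap_eq_inl]

end Aux
section Der

variable {k : Type*} [Field k]

@[simp] lemma aR_zero : aR (0 : FiberProd k) = 0 := by simp [aR, map_zero]
@[simp] lemma bR_zero : bR (0 : FiberProd k) = 0 := by simp [bR, map_zero]
@[simp] lemma cR_zero : cR (0 : FiberProd k) = 0 := by simp [cR, map_zero]

/-- The detection module: a three-dimensional `k`-vector space with a suitable
`FiberProd k`-module structure. -/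
@[nolint unusedArguments]
def MM (k : Type*) [Field k] : Type _ := k × k × k

instance : AddCommGroup (MM k) := inferInstanceAs (AddCommGroup (k × k × k))
instance : Module k (MM k) := inferInstanceAs (Module k (k × k × k))

noncomputable instance : SMul (FiberProd k) (MM k) :=
  ⟨fun r m => (aR r * m.1, aR r * m.2.1, aR r * m.2.2 + bR r * m.1 + cR r * m.2.1)⟩

noncomputable instance : Module (FiberProd k) (MM k) where
  one_smul m := by
    refine Prod.ext ?_ (Prod.ext ?_ ?_)
    · show aR 1 * m.1 = m.1
      rw [aR_one]; ring
    · show aR 1 * m.2.1 = m.2.1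
      rw [aR_one]; ring
    · show aR 1 * m.2.2 + bR 1 * m.1 + cR 1 * m.2.1 = m.2.2
      rw [aR_one, bR_one, cR_one]; ring
  mul_smul r s m := by
    refine Prod.ext ?_ (Prod.ext ?_ ?_)
    · show aR (r * s) * m.1 = aR r * (aR s * m.1)
      rw [aR_mul]; ring
    · show aR (r * s) * m.2.1 = aR r * (aR s * m.2.1)
      rw [aR_mul]; ring
    · show aR (r * s) * m.2.2 + bR (r * s) * m.1 + cR (r * s) * m.2.1
        = aR r * (aR s * m.2.2 + bR s * m.1 + cR s * m.2.1)
          + bR r * (aR s * m.1) + cR r * (aR s * m.2.1)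
      rw [aR_mul, bR_mul, cR_mul]; ring
  smul_zero r := by
    refine Prod.ext ?_ (Prod.ext ?_ ?_)
    · show aR r * 0 = (0 : k); ring
    · show aR r * 0 = (0 : k); ring
    · show aR r * 0 + bR r * 0 + cR r * 0 = (0 : k); ring
  smul_add r m n := by
    refine Prod.ext ?_ (Prod.ext ?_ ?_)
    · show aR r * (m.1 + n.1) = aR r * m.1 + aR r * n.1; ring
    · show aR r * (m.2.1 + n.2.1) = aR r * m.2.1 + aR r * n.2.1; ring
    · show aR r * (m.2.2 + n.2.2) + bR r * (m.1 + n.1) + cR r * (m.2.1 + n.2.1)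
        = (aR r * m.2.2 + bR r * m.1 + cR r * m.2.1)
          + (aR r * n.2.2 + bR r * n.1 + cR r * n.2.1); ring
  add_smul r s m := by
    refine Prod.ext ?_ (Prod.ext ?_ ?_)
    · show aR (r + s) * m.1 = aR r * m.1 + aR s * m.1
      rw [aR_add]; ring
    · show aR (r + s) * m.2.1 = aR r * m.2.1 + aR s * m.2.1
      rw [aR_add]; ring
    · show aR (r + s) * m.2.2 + bR (r + s) * m.1 + cR (r + s) * m.2.1
        = (aR r * m.2.2 + bR r * m.1 + cR r * m.2.1)
          + (aR s * m.2.2 + bR s * m.1 + cR s * m.2.1)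
      rw [aR_add, bR_add, cR_add]; ring
  zero_smul m := by
    refine Prod.ext ?_ (Prod.ext ?_ ?_)
    · show aR 0 * m.1 = (0 : k)
      rw [aR_zero]; ring
    · show aR 0 * m.2.1 = (0 : k)
      rw [aR_zero]; ring
    · show aR 0 * m.2.2 + bR 0 * m.1 + cR 0 * m.2.1 = (0 : k)
      rw [aR_zero, bR_zero, cR_zero]; ring

instance : IsScalarTower k (FiberProd k) (MM k) := by
  constructor
  intro c r m
  have h : c • r = algebraMap k (FiberProd k) c * r := Algebra.smul_def c r
  rw [h]
  refine Prod.ext ?_ (Prod.ext ?_ ?_)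
  · show aR (algebraMap k (FiberProd k) c * r) * m.1 = c * (aR r * m.1)
    rw [aR_mul, aR_algebraMap]; ring
  · show aR (algebraMap k (FiberProd k) c * r) * m.2.1 = c * (aR r * m.2.1)
    rw [aR_mul, aR_algebraMap]; ring
  · show aR (algebraMap k (FiberProd k) c * r) * m.2.2
        + bR (algebraMap k (FiberProd k) c * r) * m.1
        + cR (algebraMap k (FiberProd k) c * r) * m.2.1
      = c * (aR r * m.2.2 + bR r * m.1 + cR r * m.2.1)
    rw [aR_mul, bR_mul, cR_mul, aR_algebraMap, bR_algebraMap, cR_algebraMap]; ring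

/-- The detecting derivation `R → MM`. -/
noncomputable def myDer : Derivation k (FiberProd k) (MM k) where
  toFun r := ((cR r, -bR r, 0) : MM k)
  map_add' r s := by
    refine Prod.ext ?_ (Prod.ext ?_ ?_)
    · show cR (r + s) = cR r + cR s
      rw [cR_add]
    · show -bR (r + s) = -bR r + -bR s
      rw [bR_add]; ring
    · show (0 : k) = 0 + 0; ring
  map_smul' c r := by
    refine Prod.ext ?_ (Prod.ext ?_ ?_)
    · show cR (c • r) = c * cR r
      rw [cR_smul]
    · show -bR (c • r) = c * -bR r
      rw [bR_smul]; ring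
    · show (0 : k) = c * 0; ring
  map_one_eq_zero' := by
    refine Prod.ext ?_ (Prod.ext ?_ ?_)
    · show cR (1 : FiberProd k) = (0 : k); rw [cR_one]
    · show -bR (1 : FiberProd k) = (0 : k); rw [bR_one]; ring
    · rfl
  leibniz' r s := by
    refine Prod.ext ?_ (Prod.ext ?_ ?_)
    · show cR (r * s) = (aR r * cR s) + (aR s * cR r)
      rw [cR_mul]; ring
    · show -bR (r * s) = (aR r * -bR s) + (aR s * -bR r)
      rw [bR_mul]; ring
    · show (0 : k) = (aR r * 0 + bR r * cR s + cR r * -bR s)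
        + (aR s * 0 + bR s * cR r + cR s * -bR r)
      ring

@[simp] lemma myDer_apply (r : FiberProd k) :
    myDer r = ((cR r, -bR r, 0) : MM k) := rfl

end Der
section Elts

open Polynomial TrivSqZeroExt DualNumber

variable (k : Type*) [Field k]

lemma truncAugB_mk (p : Polynomial k) :
    truncAugB k (Ideal.Quotient.mk _ p) = Polynomial.aeval (0 : k) p := rfl

/-- The element `x = (x̄, 0)` of the fiber product. -/
noncomputable def XR : FiberProd k :=
  ⟨(Ideal.Quotient.mk _ Polynomial.X, 0), by
    show truncAugB k (Ideal.Quotient.mk _ Polynomial.X) = truncAugC k 0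
    rw [truncAugB_mk, map_zero]
    simp⟩

/-- The element `y = (0, ȳ)` of the fiber product. -/
noncomputable def YR : FiberProd k :=
  ⟨(0, Ideal.Quotient.mk _ Polynomial.X), by
    show truncAugB k 0 = truncAugC k (Ideal.Quotient.mk _ Polynomial.X)
    rw [map_zero]
    show (0 : k) = truncAugB k (Ideal.Quotient.mk _ Polynomial.X)
    rw [truncAugB_mk]
    simp⟩

@[simp] lemma aR_XR : aR (XR k) = 0 := by
  show (truncToDual k (Ideal.Quotient.mk _ Polynomial.X)).fst = 0
  rw [truncToDual_mk]
  simp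

@[simp] lemma bR_XR : bR (XR k) = 1 := by
  show (truncToDual k (Ideal.Quotient.mk _ Polynomial.X)).snd = 1
  rw [truncToDual_mk]
  simp

@[simp] lemma cR_XR : cR (XR k) = 0 := by
  show (truncToDualC k 0).snd = 0
  rw [map_zero]
  simp

@[simp] lemma aR_YR : aR (YR k) = 0 := by
  show (truncToDual k 0).fst = 0
  rw [map_zero]
  simp

@[simp] lemma bR_YR : bR (YR k) = 0 := by
  show (truncToDual k 0).snd = 0
  rw [map_zero]
  simp

@[simp] lemma cR_YR : cR (YR k) = 1 := by
  show (truncToDualC k (Ideal.Quotient.mk _ Polynomial.X)).snd = 1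
  show (truncToDual k (Ideal.Quotient.mk _ Polynomial.X)).snd = 1
  rw [truncToDual_mk]
  simp

/-- The lift of an element of `B` to the fiber product. -/
noncomputable def liftB (b : TruncB k) : FiberProd k :=
  ⟨(b, algebraMap k (TruncC k) (truncAugB k b)), by
    show truncAugB k b = truncAugC k (algebraMap k (TruncC k) (truncAugB k b))
    rw [(truncAugC k).commutes]
    simp⟩

/-- The lift of an element of `C` to the fiber product. -/
noncomputable def liftC (c : TruncC k) : FiberProd k :=
  ⟨(algebraMap k (TruncB k) (truncAugC k c), c), by
    show truncAugB k (algebraMap k (TruncB k) (truncAugC k c)) = truncAugC k c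
    rw [(truncAugB k).commutes]
    simp⟩

lemma algebraMap_toB (r : FiberProd k) :
    algebraMap (FiberProd k) (TruncB k) r = (r : TruncB k × TruncC k).1 := rfl

lemma algebraMap_toC (r : FiberProd k) :
    algebraMap (FiberProd k) (TruncC k) r = (r : TruncB k × TruncC k).2 := rfl

lemma kaehlerComparison_apply (η : Ω[(FiberProd k)⁄k]) :
    kaehlerComparison k η =
      (KaehlerDifferential.map k k (FiberProd k) (TruncB k) η,
       KaehlerDifferential.map k k (FiberProd k) (TruncC k) η) := rfl

end Elts
noncomputable instance (k : Type*) [Field k] : Module (FiberProd k) (Ω[TruncB k⁄k]) :=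
  instModuleKaehlerDifferentialOfSMulCommClass k (TruncB k) (R' := FiberProd k)

noncomputable instance (k : Type*) [Field k] : Module (FiberProd k) (Ω[TruncC k⁄k]) :=
  instModuleKaehlerDifferentialOfSMulCommClass k (TruncC k) (R' := FiberProd k)

instance (k : Type*) [Field k] :
    IsScalarTower (FiberProd k) (TruncB k) (Ω[TruncB k⁄k]) :=
  KaehlerDifferential.isScalarTower_of_tower (R := k) (S := TruncB k)
    (R₁ := FiberProd k) (R₂ := TruncB k)

instance (k : Type*) [Field k] :
    IsScalarTower (FiberProd k) (TruncC k) (Ω[TruncC k⁄k]) :=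
  KaehlerDifferential.isScalarTower_of_tower (R := k) (S := TruncC k)
    (R₁ := FiberProd k) (R₂ := TruncC k)
section Surj

variable (k : Type*) [Field k]

lemma memB_range (ω : Ω[TruncB k⁄k]) :
    ((ω, 0) : Ω[TruncB k⁄k] × Ω[TruncC k⁄k]) ∈ LinearMap.range (kaehlerComparison k) := by
  have hω : ω ∈ (⊤ : Submodule (TruncB k) (Ω[TruncB k⁄k])) := trivial
  rw [← KaehlerDifferential.span_range_derivation] at hω
  induction hω using Submodule.span_induction with
  | mem x hx =>
      obtain ⟨b, rfl⟩ := hx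
      refine ⟨KaehlerDifferential.D k (FiberProd k) (liftB k b), ?_⟩
      rw [kaehlerComparison_apply]
      refine Prod.ext ?_ ?_
      · show KaehlerDifferential.map k k (FiberProd k) (TruncB k)
          (KaehlerDifferential.D k (FiberProd k) (liftB k b)) = _
        rw [KaehlerDifferential.map_D]
        rfl
      · show KaehlerDifferential.map k k (FiberProd k) (TruncC k)
          (KaehlerDifferential.D k (FiberProd k) (liftB k b)) = _
        rw [KaehlerDifferential.map_D, algebraMap_toC]
        show KaehlerDifferential.D k (TruncC k) (algebraMap k (TruncC k) (truncAugB k b)) = _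
        rw [Derivation.map_algebraMap]
  | zero => exact ⟨0, by rw [map_zero]; rfl⟩
  | add x y _ _ hx hy =>
      obtain ⟨η, hη⟩ := hx
      obtain ⟨ζ, hζ⟩ := hy
      refine ⟨η + ζ, ?_⟩
      rw [map_add, hη, hζ, Prod.mk_add_mk, add_zero]
  | smul b x _ hx =>
      obtain ⟨η, hη⟩ := hx
      have e1 : KaehlerDifferential.map k k (FiberProd k) (TruncB k) η = x :=
        congrArg Prod.fst hη
      have e2 : KaehlerDifferential.map k k (FiberProd k) (TruncC k) η = 0 :=
        congrArg Prod.snd hη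
      refine ⟨liftB k b • η, ?_⟩
      rw [kaehlerComparison_apply]
      refine Prod.ext ?_ ?_
      · show KaehlerDifferential.map k k (FiberProd k) (TruncB k) (liftB k b • η) = b • x
        rw [map_smul, e1]
        exact algebraMap_smul (TruncB k) (liftB k b) x
      · show KaehlerDifferential.map k k (FiberProd k) (TruncC k) (liftB k b • η)
          = (0 : Ω[TruncC k⁄k])
        rw [map_smul, e2]
        exact smul_zero _

lemma memC_range (ω : Ω[TruncC k⁄k]) :
    ((0, ω) : Ω[TruncB k⁄k] × Ω[TruncC k⁄k]) ∈ LinearMap.range (kaehlerComparison k) := by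
  have hω : ω ∈ (⊤ : Submodule (TruncC k) (Ω[TruncC k⁄k])) := trivial
  rw [← KaehlerDifferential.span_range_derivation] at hω
  induction hω using Submodule.span_induction with
  | mem x hx =>
      obtain ⟨c, rfl⟩ := hx
      refine ⟨KaehlerDifferential.D k (FiberProd k) (liftC k c), ?_⟩
      rw [kaehlerComparison_apply]
      refine Prod.ext ?_ ?_
      · show KaehlerDifferential.map k k (FiberProd k) (TruncB k)
          (KaehlerDifferential.D k (FiberProd k) (liftC k c)) = _
        rw [KaehlerDifferential.map_D, algebraMap_toB]
        show KaehlerDifferential.D k (TruncB k) (algebraMap k (TruncB k) (truncAugC k c)) = _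
        rw [Derivation.map_algebraMap]
      · show KaehlerDifferential.map k k (FiberProd k) (TruncC k)
          (KaehlerDifferential.D k (FiberProd k) (liftC k c)) = _
        rw [KaehlerDifferential.map_D]
        rfl
  | zero => exact ⟨0, by rw [map_zero]; rfl⟩
  | add x y _ _ hx hy =>
      obtain ⟨η, hη⟩ := hx
      obtain ⟨ζ, hζ⟩ := hy
      refine ⟨η + ζ, ?_⟩
      rw [map_add, hη, hζ, Prod.mk_add_mk, add_zero]
  | smul c x _ hx =>
      obtain ⟨η, hη⟩ := hx
      have e1 : KaehlerDifferential.map k k (FiberProd k) (TruncB k) η = 0 :=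
        congrArg Prod.fst hη
      have e2 : KaehlerDifferential.map k k (FiberProd k) (TruncC k) η = x :=
        congrArg Prod.snd hη
      refine ⟨liftC k c • η, ?_⟩
      rw [kaehlerComparison_apply]
      refine Prod.ext ?_ ?_
      · show KaehlerDifferential.map k k (FiberProd k) (TruncB k) (liftC k c • η)
          = (0 : Ω[TruncB k⁄k])
        rw [map_smul, e1]
        exact smul_zero _
      · show KaehlerDifferential.map k k (FiberProd k) (TruncC k) (liftC k c • η) = c • x
        rw [map_smul, e2]
        exact algebraMap_smul (TruncC k) (liftC k c) x

end Surj
/-- Let `k` be a field, `B = k[x]/(x²)`, `C = k[y]/(y²)`, `A = k`, and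
`R = B ×_A C ≅ k[x,y]/(x²,xy,y²)`.  The natural map
`Ω¹_{R/k} → Ω¹_{B/k} × Ω¹_{C/k}` induced by the two projections is surjective but not
injective. -/
theorem kaehlerComparison_surjective_not_injective (k : Type*) [Field k] :
    Function.Surjective (kaehlerComparison k) ∧
      ¬ Function.Injective (kaehlerComparison k) := by
  constructor
  · rintro ⟨ω1, ω2⟩
    obtain ⟨η1, h1⟩ := memB_range k ω1
    obtain ⟨η2, h2⟩ := memC_range k ω2
    refine ⟨η1 + η2, ?_⟩
    rw [map_add, h1, h2, Prod.mk_add_mk, add_zero, zero_add]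
  · intro hinj
    set ω : Ω[(FiberProd k)⁄k] := XR k • KaehlerDifferential.D k (FiberProd k) (YR k) with hω
    have hD : (myDer (k := k)).liftKaehlerDifferential ω = ((0 : k), (0 : k), (1 : k)) := by
      rw [hω, map_smul, Derivation.liftKaehlerDifferential_comp_D]
      refine Prod.ext ?_ (Prod.ext ?_ ?_)
      · show aR (XR k) * cR (YR k) = 0
        rw [aR_XR]; ring
      · show aR (XR k) * -bR (YR k) = 0
        rw [aR_XR]; ring
      · show aR (XR k) * 0 + bR (XR k) * cR (YR k) + cR (XR k) * -bR (YR k) = 1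
        rw [aR_XR, bR_XR, cR_XR, cR_YR, bR_YR]; ring
    have hkc : kaehlerComparison k ω = 0 := by
      rw [hω, kaehlerComparison_apply]
      refine Prod.ext ?_ ?_
      · show KaehlerDifferential.map k k (FiberProd k) (TruncB k)
          (XR k • KaehlerDifferential.D k (FiberProd k) (YR k)) = (0 : Ω[TruncB k⁄k] × Ω[TruncC k⁄k]).1
        rw [map_smul, KaehlerDifferential.map_D]
        have hy : algebraMap (FiberProd k) (TruncB k) (YR k) = 0 := rfl
        rw [hy, map_zero, smul_zero]
        rfl
      · show KaehlerDifferential.map k k (FiberProd k) (TruncC k)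
          (XR k • KaehlerDifferential.D k (FiberProd k) (YR k)) = (0 : Ω[TruncB k⁄k] × Ω[TruncC k⁄k]).2
        rw [map_smul, ← algebraMap_smul (TruncC k) (XR k)]
        have hx : algebraMap (FiberProd k) (TruncC k) (XR k) = 0 := rfl
        rw [hx, zero_smul]
        rfl
    have h0 : ω = 0 := hinj (by rw [hkc, map_zero])
    rw [h0, map_zero] at hD
    have h3 := congrArg (fun m : MM k => m.2.2) hD
    exact one_ne_zero (α := k) h3.symm
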